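/- Let g = g_{5,3,7} and let F = (α, β, γ, δ, σ) ∈ g*. Then: (1) if γ = δ = σ = 0 then Ω_F = {F}; (2) if γ = δ = 0, σ ≠ 0 then Ω_F = {(α, y, 0, 0, s) : y ∈ ℝ, σs > 0}; (3) if γ = 0, δ ≠ 0, σ = 0 then Ω_F = {(α, y, 0, t, s) : y ∈ ℝ, δt > 0, s = t·ln(t/δ)}; (4) if γ = 0, δ ≠ 0, σ ≠ 0 then Ω_F = {(α, y, 0, t, s) : y ∈ ℝ, δt > 0, s = t·ln(t/δ) + σ·t/δ}; (5) if γ ≠ 0, δ = σ = 0 then Ω_F = {(x, y, z, t, s) : y ∈ ℝ, γz > 0, x = α + γ − z, t = z·ln(z/γ), s = (z/2)·ln²(z/γ)}; (6) if γ ≠ 0, δ = 0, σ ≠ 0 then Ω_F = {(x, y, z, t, s) : y ∈ ℝ, γz > 0, x = α + γ − z, t = z·ln(z/γ), s = (z/2)·ln²(z/γ) + σ·z/γ}; (7) if γ ≠ 0, δ ≠ 0, σ = 0 then Ω_F = {(x, y, z, t, s) : y ∈ ℝ, γz > 0, x = α + γ − z, t = z·ln(z/γ) + δ·z/γ, s =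 (z/2)·ln²(z/γ) + (δ/γ)·z·ln(z/γ)}; (8) if γ ≠ 0, δ ≠ 0, σ ≠ 0 then Ω_F = {(x, y, z, t, s) : y ∈ ℝ, γz > 0, x = α + γ − z, t = z·ln(z/γ) + δ·z/γ, s = (z/2)·ln²(z/γ) + (δ/γ)·z·ln(z/γ) + σ·z/γ}. -/

import Mathlib

/-- The Lie bracket of g_{5,3,7}: [X1,X2] = X3, [X2,X3] = X3, [X2,X4] = X3 + X4, [X2,X5] = X4 + X5,
written in coordinates with respect to the basis (X₁, X₂, X₃, X₄, X₅) (all other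
brackets of basis vectors vanish); it is the bilinear extension of the structure
constants above. -/
def bracketg537 (U V : Fin 5 → ℝ) : Fin 5 → ℝ :=
  ![0, 0,
    (U 0 * V 1 - U 1 * V 0) + (U 1 * V 2 - U 2 * V 1) + (U 1 * V 3 - U 3 * V 1),
    (U 1 * V 3 - U 3 * V 1) + (U 1 * V 4 - U 4 * V 1),
    U 1 * V 4 - U 4 * V 1]

/-- The matrix of the adjoint endomorphism ad_U = [U, ·] in the basis (X₁, ..., X₅):
column j holds the coordinates of [U, Xⱼ]. -/
def adg537 (U : Fin 5 → ℝ) : Matrix (Fin 5) (Fin 5) ℝ :=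
  Matrix.of fun i j => bracketg537 U (Pi.single j 1) i

/-- The orbit Ω_F = { F ∘ exp(ad_U) : U ∈ g } in coordinates with respect to the dual
basis: a functional F' is identified with the vector (F'(X₁), ..., F'(X₅)), so that
F ∘ exp(ad_U) corresponds to the row-vector–matrix product vecMul F (exp (ad_U)). -/
noncomputable def orbitg537 (F : Fin 5 → ℝ) : Set (Fin 5 → ℝ) :=
  Set.range fun U : Fin 5 → ℝ => Matrix.vecMul F (NormedSpace.exp (adg537 U))

open Matrix NormedSpace
set_option maxHeartbeats 1000000

def adP (a b c d : ℝ) : Matrix (Fin 5) (Fin 5) ℝ :=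
  Matrix.of ![![0,0,0,0,0],![0,0,0,0,0],![-b,a,b,b,0],![0,c,0,b,b],![0,d,0,0,b]]

lemma adg537_eq (U : Fin 5 → ℝ) :
    adg537 U = adP (U 0 - U 2 - U 3) (U 1) (-U 3 - U 4) (-U 4) := by
  ext i j
  fin_cases i <;> fin_cases j <;>
    simp [adg537, adP, bracketg537, Pi.single_apply, Matrix.vecHead, Matrix.vecTail,
      Function.comp] <;> ring

def Dm (b : ℝ) : Matrix (Fin 5) (Fin 5) ℝ := Matrix.diagonal ![0,0,b,b,b]

def Nm (b : ℝ) : Matrix (Fin 5) (Fin 5) ℝ :=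
  Matrix.of ![![0,0,0,0,0],![0,0,0,0,0],![0,0,0,b,0],![0,0,0,0,b],![0,0,0,0,0]]

noncomputable def Wm (a b c d : ℝ) : Matrix (Fin 5) (Fin 5) ℝ :=
  Matrix.of ![![0,0,0,0,0],![0,0,0,0,0],![-1,(a-c+d)/b,0,0,0],![0,(c-d)/b,0,0,0],![0,d/b,0,0,0]]

noncomputable def Em (a b c d : ℝ) : Matrix (Fin 5) (Fin 5) ℝ :=
  Matrix.of ![![1,0,0,0,0],![0,1,0,0,0],
    ![1-Real.exp b, ((Real.exp b-1)*(a-c+d) + b*Real.exp b*(c-d) + (b^2/2)*Real.exp b*d)/b,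
      Real.exp b, b*Real.exp b, (b^2/2)*Real.exp b],
    ![0, ((Real.exp b-1)*(c-d) + b*Real.exp b*d)/b, 0, Real.exp b, b*Real.exp b],
    ![0, (Real.exp b-1)*d/b, 0, 0, Real.exp b]]

lemma exp_of_pow3 (A : Matrix (Fin 5) (Fin 5) ℝ) (h : A ^ 3 = 0) :
    exp A = 1 + A + (2:ℝ)⁻¹ • A ^ 2 := by
  rw [exp_eq_tsum (𝕂 := ℝ)]; beta_reduce; rw [tsum_eq_sum (s := Finset.range 3)]
  · norm_num [Finset.sum_range_succ]
  · intro n hn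
    simp only [Finset.mem_range, not_lt] at hn
    obtain ⟨m, rfl⟩ : ∃ m, n = 3 + m := ⟨n - 3, by omega⟩
    rw [pow_add, h, zero_mul, smul_zero]

lemma exp_of_pow2 (A : Matrix (Fin 5) (Fin 5) ℝ) (h : A ^ 2 = 0) :
    exp A = 1 + A := by
  rw [exp_eq_tsum (𝕂 := ℝ)]; beta_reduce; rw [tsum_eq_sum (s := Finset.range 2)]
  · norm_num [Finset.sum_range_succ]
  · intro n hn
    simp only [Finset.mem_range, not_lt] at hn
    obtain ⟨m, rfl⟩ : ∃ m, n = 2 + m := ⟨n - 2, by omega⟩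
    rw [pow_add, h, zero_mul, smul_zero]

lemma Nm_sq (b : ℝ) : Nm b ^ 2 =
    Matrix.of ![![0,0,0,0,0],![0,0,0,0,0],![0,0,0,0,b^2],![0,0,0,0,0],![0,0,0,0,0]] := by
  rw [pow_two]
  ext i j
  fin_cases i <;> fin_cases j <;>
    simp [Nm, Matrix.mul_apply, Fin.sum_univ_five, Matrix.vecHead, Matrix.vecTail] <;> ring

lemma Nm_pow3 (b : ℝ) : Nm b ^ 3 = 0 := by
  rw [pow_succ, Nm_sq]
  ext i j
  fin_cases i <;> fin_cases j <;>
    simp [Nm, Matrix.mul_apply, Fin.sum_univ_five, Matrix.vecHead, Matrix.vecTail]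

lemma commute_DN (b : ℝ) : Commute (Dm b) (Nm b) := by
  show Dm b * Nm b = Nm b * Dm b
  ext i j
  fin_cases i <;> fin_cases j <;>
    simp [Dm, Nm, Matrix.mul_apply, Fin.sum_univ_five, Matrix.diagonal_apply,
      Matrix.vecHead, Matrix.vecTail]

lemma exp_Dm (b : ℝ) :
    exp (Dm b) = Matrix.diagonal ![1,1,Real.exp b,Real.exp b,Real.exp b] := by
  rw [Dm, Matrix.exp_diagonal, Pi.exp_def]
  ext i j
  fin_cases i <;> fin_cases j <;>
    simp [Matrix.diagonal_apply, ← Real.exp_eq_exp_ℝ, Matrix.vecHead, Matrix.vecTail]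

lemma exp_DN (b : ℝ) :
    exp (Dm b + Nm b) =
      Matrix.of ![![1,0,0,0,0],![0,1,0,0,0],
        ![0,0,Real.exp b, b*Real.exp b, (b^2/2)*Real.exp b],
        ![0,0,0,Real.exp b, b*Real.exp b],
        ![0,0,0,0,Real.exp b]] := by
  rw [Matrix.exp_add_of_commute _ _ (commute_DN b), exp_Dm, exp_of_pow3 _ (Nm_pow3 b), Nm_sq]
  ext i j
  fin_cases i <;> fin_cases j <;>
    simp [Nm, Matrix.mul_apply, Fin.sum_univ_five, Matrix.diagonal_apply, Matrix.one_apply,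
      Matrix.vecHead, Matrix.vecTail] <;> ring

lemma Wm_inv (a b c d : ℝ) : (1 - Wm a b c d) * (1 + Wm a b c d) = 1 := by
  ext i j
  fin_cases i <;> fin_cases j <;>
    simp [Wm, Matrix.mul_apply, Fin.sum_univ_five, Matrix.one_apply,
      Matrix.vecHead, Matrix.vecTail]

lemma Wm_inv' (a b c d : ℝ) : (1 + Wm a b c d) * (1 - Wm a b c d) = 1 := by
  ext i j
  fin_cases i <;> fin_cases j <;>
    simp [Wm, Matrix.mul_apply, Fin.sum_univ_five, Matrix.one_apply,
      Matrix.vecHead, Matrix.vecTail]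

lemma conj_eq (a b c d : ℝ) (hb : b ≠ 0) :
    (1 - Wm a b c d) * (Dm b + Nm b) * (1 + Wm a b c d) = adP a b c d := by
  ext i j
  fin_cases i <;> fin_cases j <;>
    · simp [Wm, Dm, Nm, adP, Matrix.mul_apply, Fin.sum_univ_five, Matrix.one_apply,
        Matrix.diagonal_apply, Matrix.vecHead, Matrix.vecTail]
      try field_simp
      try ring

lemma exp_adP (a b c d : ℝ) (hb : b ≠ 0) :
    exp (adP a b c d) = Em a b c d := by
  have hu : ∃ u : (Matrix (Fin 5) (Fin 5) ℝ)ˣ,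
      (u : Matrix (Fin 5) (Fin 5) ℝ) = 1 - Wm a b c d ∧
      ((u⁻¹ : (Matrix (Fin 5) (Fin 5) ℝ)ˣ) : Matrix (Fin 5) (Fin 5) ℝ) = 1 + Wm a b c d :=
    ⟨⟨1 - Wm a b c d, 1 + Wm a b c d, Wm_inv a b c d, Wm_inv' a b c d⟩, rfl, rfl⟩
  obtain ⟨u, hu1, hu2⟩ := hu
  rw [← conj_eq a b c d hb]
  have h := Matrix.exp_units_conj u (Dm b + Nm b)
  rw [hu1, hu2] at h
  rw [h, exp_DN]
  ext i j
  fin_cases i <;> fin_cases j <;>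
    · simp [Wm, Em, Matrix.mul_apply, Fin.sum_univ_five, Matrix.one_apply,
        Matrix.vecHead, Matrix.vecTail]
      try field_simp
      try ring

lemma adP_sq_zero (a c d : ℝ) : adP a 0 c d ^ 2 = 0 := by
  rw [pow_two]
  ext i j
  fin_cases i <;> fin_cases j <;>
    simp [adP, Matrix.mul_apply, Fin.sum_univ_five, Matrix.vecHead, Matrix.vecTail]

lemma exp_adP_zero (a c d : ℝ) : exp (adP a 0 c d) = 1 + adP a 0 c d :=
  exp_of_pow2 _ (adP_sq_zero a c d)

noncomputable def kk (b : ℝ) : ℝ := if b = 0 then 1 else (Real.exp b - 1)/b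

lemma kk_ne (b : ℝ) : kk b ≠ 0 := by
  rw [kk]
  split_ifs with h
  · norm_num
  · have : Real.exp b - 1 ≠ 0 := fun hc => by
      have h2 : Real.exp b = Real.exp 0 := by rw [Real.exp_zero]; linarith
      exact h (Real.exp_injective h2)
    exact div_ne_zero this h

lemma master (α β γ δ σ a b c d : ℝ) :
    Matrix.vecMul ![α,β,γ,δ,σ] (exp (adP a b c d)) = ![α + γ - Real.exp b * γ,
      β + (γ*(kk b*(a-c+d) + Real.exp b*(c-d) + (b/2)*Real.exp b*d)
        + δ*(kk b*(c-d) + Real.exp b*d) + σ*(kk b*d)),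
      Real.exp b * γ, Real.exp b*(δ+b*γ), Real.exp b*(σ+b*δ+b^2/2*γ)] := by
  by_cases hb : b = 0
  · subst hb
    rw [exp_adP_zero]
    funext j
    fin_cases j <;>
      · simp [kk, adP, Matrix.vecMul, dotProduct, Fin.sum_univ_five, Matrix.one_apply,
          Matrix.vecHead, Matrix.vecTail]
        try ring
  · rw [exp_adP _ _ _ _ hb]
    funext j
    fin_cases j <;>
      · simp [kk, hb, Em, Matrix.vecMul, dotProduct, Fin.sum_univ_five,
          Matrix.vecHead, Matrix.vecTail]
        try field_simp
        try ring

noncomputable def Tv (α γ δ σ b y : ℝ) : Fin 5 → ℝ :=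
  ![α + γ - Real.exp b * γ, y, Real.exp b * γ, Real.exp b*(δ+b*γ),
    Real.exp b*(σ+b*δ+b^2/2*γ)]

lemma key (α β γ δ σ : ℝ) :
    orbitg537 ![α,β,γ,δ,σ] = {p | ∃ b y : ℝ,
      (γ = 0 → δ = 0 → σ = 0 → y = β) ∧ p = Tv α γ δ σ b y} := by
  ext p
  constructor
  · rintro ⟨U, rfl⟩
    beta_reduce
    rw [adg537_eq, master]
    refine ⟨U 1, _, fun h1 h2 h3 => ?_, rfl⟩
    rw [h1, h2, h3]; ring
  · rintro ⟨b, y, hy, rfl⟩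
    by_cases hγ : γ = 0
    · by_cases hδ : δ = 0
      · by_cases hσ : σ = 0
        · refine ⟨![0,b,0,0,0], ?_⟩
          beta_reduce
          rw [show adg537 ![0,b,0,0,0] = adP 0 b 0 0 by rw [adg537_eq]; simp, master]
          subst hγ hδ hσ
          rw [hy rfl rfl rfl]
          funext j; fin_cases j <;> simp [Tv] <;> try ring
        · set d := (y - β)/(σ * kk b) with hd
          refine ⟨![d,b,0,d,-d], ?_⟩
          beta_reduce
          rw [show adg537 ![d,b,0,d,-d] = adP 0 b 0 d by rw [adg537_eq]; simp, master]
          subst hγ hδ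
          funext j; fin_cases j <;>
            · simp [Tv, hd]
              try field_simp [kk_ne b]
              try ring
      · set c := (y - β)/(δ * kk b) with hc
        refine ⟨![-c,b,0,-c,0], ?_⟩
        beta_reduce
        rw [show adg537 ![-c,b,0,-c,0] = adP 0 b c 0 by rw [adg537_eq]; simp, master]
        subst hγ
        funext j; fin_cases j <;>
          · simp [Tv, hc]
            try field_simp [kk_ne b]
            try ring
    · set a := (y - β)/(γ * kk b) with ha
      refine ⟨![a,b,0,0,0], ?_⟩
      beta_reduce
      rw [show adg537 ![a,b,0,0,0] = adP a b 0 0 by rw [adg537_eq]; simp, master]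
      funext j; fin_cases j <;>
        · simp [Tv, ha]
          try field_simp [kk_ne b]
          try ring

lemma div_self_pos {γ z : ℝ} (hγ : γ ≠ 0) (h : γ * z > 0) : z / γ > 0 := by
  have h2 : z / γ = (γ * z) / γ ^ 2 := by field_simp
  rw [h2]
  exact div_pos h (by positivity)

lemma case1 (α β : ℝ) : orbitg537 ![α,β,0,0,0] = {![α,β,(0:ℝ),0,0]} := by
  rw [key]
  ext p
  simp only [Set.mem_setOf_eq, Set.mem_singleton_iff]
  constructor
  · rintro ⟨b, y, hc, rfl⟩
    rw [hc (by norm_num) (by norm_num) (by norm_num)]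
    funext j; fin_cases j <;> simp [Tv]
  · rintro rfl
    exact ⟨0, β, fun _ _ _ => rfl, by funext j; fin_cases j <;> simp [Tv]⟩

lemma case2 (α β σ : ℝ) (hσ : σ ≠ 0) :
    orbitg537 ![α,β,0,0,σ] = {p | ∃ y s : ℝ, σ * s > 0 ∧ p = ![α, y, 0, 0, s]} := by
  rw [key]
  ext p
  simp only [Set.mem_setOf_eq]
  constructor
  · rintro ⟨b, y, -, rfl⟩
    refine ⟨y, Real.exp b * σ, ?_, ?_⟩
    · have h2 : σ * (Real.exp b * σ) = Real.exp b * (σ * σ) := by ring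
      rw [gt_iff_lt, h2]
      exact mul_pos (Real.exp_pos b) (mul_self_pos.mpr hσ)
    · funext j; fin_cases j <;> · simp [Tv]; try ring
  · rintro ⟨y, s, hs, rfl⟩
    have hpos : s / σ > 0 := div_self_pos hσ hs
    refine ⟨Real.log (s / σ), y, fun _ _ h => absurd h hσ, ?_⟩
    funext j; fin_cases j <;>
      simp [Tv, Real.exp_log hpos] <;> field_simp

lemma case34 (α β δ σ : ℝ) (hδ : δ ≠ 0) :
    orbitg537 ![α,β,0,δ,σ] = {p | ∃ y t s : ℝ, δ * t > 0 ∧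
      s = t * Real.log (t / δ) + σ * t / δ ∧ p = ![α, y, 0, t, s]} := by
  rw [key]
  ext p
  simp only [Set.mem_setOf_eq]
  constructor
  · rintro ⟨b, y, -, rfl⟩
    refine ⟨y, Real.exp b * δ, Real.exp b * (σ + b * δ), ?_, ?_, ?_⟩
    · have h2 : δ * (Real.exp b * δ) = Real.exp b * (δ * δ) := by ring
      rw [gt_iff_lt, h2]
      exact mul_pos (Real.exp_pos b) (mul_self_pos.mpr hδ)
    · rw [show Real.exp b * δ / δ = Real.exp b by field_simp, Real.log_exp]
      field_simp
      ring
    · funext j; fin_cases j <;> · simp [Tv]; try ring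
  · rintro ⟨y, t, s, ht, hs, rfl⟩
    have hpos : t / δ > 0 := div_self_pos hδ ht
    refine ⟨Real.log (t / δ), y, fun _ h => absurd h hδ, ?_⟩
    funext j; fin_cases j <;>
      · simp [Tv, Real.exp_log hpos, hs]
        try field_simp
        try ring

lemma case58 (α β γ δ σ : ℝ) (hγ : γ ≠ 0) :
    orbitg537 ![α,β,γ,δ,σ] = {p | ∃ x y z t s : ℝ, γ * z > 0 ∧ x = α + γ - z ∧
      t = z * Real.log (z / γ) + δ * z / γ ∧
      s = z / 2 * (Real.log (z / γ)) ^ 2 + δ / γ * z * Real.log (z / γ) + σ * z / γ ∧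
      p = ![x, y, z, t, s]} := by
  rw [key]
  ext p
  simp only [Set.mem_setOf_eq]
  constructor
  · rintro ⟨b, y, -, rfl⟩
    refine ⟨α + γ - Real.exp b * γ, y, Real.exp b * γ, Real.exp b * (δ + b * γ),
      Real.exp b * (σ + b * δ + b ^ 2 / 2 * γ), ?_, rfl, ?_, ?_, ?_⟩
    · have h2 : γ * (Real.exp b * γ) = Real.exp b * (γ * γ) := by ring
      rw [gt_iff_lt, h2]
      exact mul_pos (Real.exp_pos b) (mul_self_pos.mpr hγ)
    · rw [show Real.exp b * γ / γ = Real.exp b by field_simp, Real.log_exp]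
      field_simp
      ring
    · rw [show Real.exp b * γ / γ = Real.exp b by field_simp, Real.log_exp]
      field_simp
      ring
    · funext j; fin_cases j <;> · simp [Tv]; try ring
  · rintro ⟨x, y, z, t, s, hz, hx, ht, hs, rfl⟩
    have hpos : z / γ > 0 := div_self_pos hγ hz
    refine ⟨Real.log (z / γ), y, fun h => absurd h hγ, ?_⟩
    funext j; fin_cases j <;>
      · simp [Tv, Real.exp_log hpos, hx, ht, hs]
        try field_simp
        try ring

theorem kOrbits_g537 (α β γ δ σ : ℝ) :
    (γ = 0 → δ = 0 → σ = 0 → orbitg537 ![α, β, γ, δ, σ] = {![α, β, γ, δ, σ]}) ∧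
    (γ = 0 → δ = 0 → σ ≠ 0 → orbitg537 ![α, β, γ, δ, σ] = {p | ∃ y s : ℝ, σ * s > 0 ∧ p = ![α, y, 0, 0, s]}) ∧
    (γ = 0 → δ ≠ 0 → σ = 0 → orbitg537 ![α, β, γ, δ, σ] = {p | ∃ y t s : ℝ, δ * t > 0 ∧ s = t * Real.log (t / δ) ∧ p = ![α, y, 0, t, s]}) ∧
    (γ = 0 → δ ≠ 0 → σ ≠ 0 → orbitg537 ![α, β, γ, δ, σ] = {p | ∃ y t s : ℝ, δ * t > 0 ∧ s = t * Real.log (t / δ) + σ * t / δ ∧ p = ![α, y, 0, t, s]}) ∧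
    (γ ≠ 0 → δ = 0 → σ = 0 → orbitg537 ![α, β, γ, δ, σ] = {p | ∃ x y z t s : ℝ, γ * z > 0 ∧ x = α + γ - z ∧ t = z * Real.log (z / γ) ∧ s = z / 2 * (Real.log (z / γ)) ^ 2 ∧ p = ![x, y, z, t, s]}) ∧
    (γ ≠ 0 → δ = 0 → σ ≠ 0 → orbitg537 ![α, β, γ, δ, σ] = {p | ∃ x y z t s : ℝ, γ * z > 0 ∧ x = α + γ - z ∧ t = z * Real.log (z / γ) ∧ s = z / 2 * (Real.log (z / γ)) ^ 2 + σ * z / γ ∧ p = ![x, y, z, t, s]}) ∧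
    (γ ≠ 0 → δ ≠ 0 → σ = 0 → orbitg537 ![α, β, γ, δ, σ] = {p | ∃ x y z t s : ℝ, γ * z > 0 ∧ x = α + γ - z ∧ t = z * Real.log (z / γ) + δ * z / γ ∧ s = z / 2 * (Real.log (z / γ)) ^ 2 + δ / γ * z * Real.log (z / γ) ∧ p = ![x, y, z, t, s]}) ∧
    (γ ≠ 0 → δ ≠ 0 → σ ≠ 0 → orbitg537 ![α, β, γ, δ, σ] = {p | ∃ x y z t s : ℝ, γ * z > 0 ∧ x = α + γ - z ∧ t = z * Real.log (z / γ) + δ * z / γ ∧ s = z / 2 * (Real.log (z / γ)) ^ 2 + δ / γ * z * Real.log (z / γ) + σ * z / γ ∧ p = ![x, y, z, t, s]}) := by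
  refine ⟨?_, ?_, ?_, ?_, ?_, ?_, ?_, ?_⟩
  · intro h1 h2 h3; subst h1 h2 h3; exact case1 α β
  · intro h1 h2 h3; subst h1 h2; exact case2 α β σ h3
  · intro h1 h2 h3; subst h1 h3
    rw [case34 α β δ 0 h2]
    ext p
    simp only [Set.mem_setOf_eq]
    constructor
    · rintro ⟨y, t, s, hh1, hh2, rfl⟩
      exact ⟨y, t, s, hh1, by rw [hh2]; ring, rfl⟩
    · rintro ⟨y, t, s, hh1, hh2, rfl⟩
      exact ⟨y, t, s, hh1, by rw [hh2]; ring, rfl⟩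
  · intro h1 h2 h3; subst h1; exact case34 α β δ σ h2
  · intro h1 h2 h3; subst h2 h3
    rw [case58 α β γ 0 0 h1]
    ext p
    simp only [Set.mem_setOf_eq]
    constructor
    · rintro ⟨x, y, z, t, s, hh1, hh2, hh3, hh4, rfl⟩
      exact ⟨x, y, z, t, s, hh1, hh2, by rw [hh3]; ring, by rw [hh4]; ring, rfl⟩
    · rintro ⟨x, y, z, t, s, hh1, hh2, hh3, hh4, rfl⟩
      exact ⟨x, y, z, t, s, hh1, hh2, by rw [hh3]; ring, by rw [hh4]; ring, rfl⟩
  · intro h1 h2 h3; subst h2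
    rw [case58 α β γ 0 σ h1]
    ext p
    simp only [Set.mem_setOf_eq]
    constructor
    · rintro ⟨x, y, z, t, s, hh1, hh2, hh3, hh4, rfl⟩
      exact ⟨x, y, z, t, s, hh1, hh2, by rw [hh3]; ring, by rw [hh4]; ring, rfl⟩
    · rintro ⟨x, y, z, t, s, hh1, hh2, hh3, hh4, rfl⟩
      exact ⟨x, y, z, t, s, hh1, hh2, by rw [hh3]; ring, by rw [hh4]; ring, rfl⟩
  · intro h1 h2 h3; subst h3
    rw [case58 α β γ δ 0 h1]
    ext p
    simp only [Set.mem_setOf_eq]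
    constructor
    · rintro ⟨x, y, z, t, s, hh1, hh2, hh3, hh4, rfl⟩
      exact ⟨x, y, z, t, s, hh1, hh2, hh3, by rw [hh4]; ring, rfl⟩
    · rintro ⟨x, y, z, t, s, hh1, hh2, hh3, hh4, rfl⟩
      exact ⟨x, y, z, t, s, hh1, hh2, hh3, by rw [hh4]; ring, rfl⟩
  · intro h1 h2 h3; exact case58 α β γ δ σ h1
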